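/- Under the stated hypotheses on j, M, κ, λ, the family U_j := {A : A is a ZFSet-subset of 𝒫_κ(λ) and j''λ ∈ j(A)} is a fine normal ultrafilter on I := 𝒫_κ(λ). (Single-universe form of Claim 2.2.1: the ultrafilter derived from a λ-supercompactness embedding is fine and normal.) -/

import Mathlib

open FirstOrder

/-- The language `L_ε` with a single binary relation symbol (Mathlib's graph language,
whose unique binary relation we interpret as membership). -/
abbrev Lε : FirstOrder.Language := FirstOrder.Language.graph

/-- Any type with a binary relation is an `L_ε`-structure. -/
def memStruc (S : Type*) (r : S → S → Prop) : Lε.Structure S where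
  RelMap | .adj => fun x => r (x 0) (x 1)

/-- Satisfaction of an `L_ε`-formula in the structure given by a binary relation `r` on `S`. -/
def RealizeIn (S : Type*) (r : S → S → Prop) {n : ℕ}
    (φ : Lε.Formula (Fin n)) (v : Fin n → S) : Prop :=
  @FirstOrder.Language.Formula.Realize Lε S (memStruc S r) _ φ v

open FirstOrder.Language

/-- Bounded-formula satisfaction in the structure given by `r`. -/
def BRealizeIn (S : Type*) (r : S → S → Prop) {k n : ℕ}
    (φ : Lε.BoundedFormula (Fin k) n) (v : Fin k → S) (xs : Fin n → S) : Prop :=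
  @FirstOrder.Language.BoundedFormula.Realize Lε S (memStruc S r) _ _ φ v xs

lemma realizeIn_eq (S : Type*) (r : S → S → Prop) {k : ℕ}
    (φ : Lε.Formula (Fin k)) (v : Fin k → S) :
    RealizeIn S r φ v = BRealizeIn S r φ v default := rfl

/-- atomic membership formula between two variables -/
def memf {k n : ℕ} (a b : Fin k ⊕ Fin n) : Lε.BoundedFormula (Fin k) n :=
  Language.adj.boundedFormula₂ (Term.var a) (Term.var b)

/-- atomic equality formula between two variables -/
def eqf {k n : ℕ} (a b : Fin k ⊕ Fin n) : Lε.BoundedFormula (Fin k) n :=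
  Term.bdEqual (Term.var a) (Term.var b)

/-- lift a variable index into a context with one more bound variable -/
def lft {k n : ℕ} (a : Fin k ⊕ Fin n) : Fin k ⊕ Fin (n + 1) :=
  Sum.map id Fin.castSucc a

section
variable {S : Type*} {r : S → S → Prop} {k n : ℕ}

@[simp] lemma elim_snoc_lft (v : Fin k → S) (xs : Fin n → S) (a : S) (i : Fin k ⊕ Fin n) :
    Sum.elim v (Fin.snoc xs a) (lft i) = Sum.elim v xs i := by
  cases i <;> simp [lft]

@[simp] lemma elim_snoc_last (v : Fin k → S) (xs : Fin n → S) (a : S) :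
    Sum.elim v (Fin.snoc xs a) (Sum.inr (Fin.last n)) = a := by simp

@[simp] lemma brealize_memf (v : Fin k → S) (xs : Fin n → S) (a b : Fin k ⊕ Fin n) :
    BRealizeIn S r (memf a b) v xs ↔ r (Sum.elim v xs a) (Sum.elim v xs b) := by
  letI : Lε.Structure S := memStruc S r
  show (Language.adj.boundedFormula₂ (Term.var a) (Term.var b)).Realize v xs ↔ _
  rw [BoundedFormula.realize_rel₂]
  simp [Term.realize]
  rfl

@[simp] lemma brealize_eqf (v : Fin k → S) (xs : Fin n → S) (a b : Fin k ⊕ Fin n) :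
    BRealizeIn S r (eqf a b) v xs ↔ Sum.elim v xs a = Sum.elim v xs b := by
  letI : Lε.Structure S := memStruc S r
  show (Term.bdEqual (Term.var a) (Term.var b)).Realize v xs ↔ _
  rw [BoundedFormula.realize_bdEqual]
  simp [Term.realize]

@[simp] lemma brealize_all (v : Fin k → S) (xs : Fin n → S) (φ : Lε.BoundedFormula (Fin k) (n+1)) :
    BRealizeIn S r (∀' φ) v xs ↔ ∀ a : S, BRealizeIn S r φ v (Fin.snoc xs a) := by
  letI : Lε.Structure S := memStruc S r
  exact BoundedFormula.realize_all

@[simp] lemma brealize_ex (v : Fin k → S) (xs : Fin n → S) (φ : Lε.BoundedFormula (Fin k) (n+1)) :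
    BRealizeIn S r (∃' φ) v xs ↔ ∃ a : S, BRealizeIn S r φ v (Fin.snoc xs a) := by
  letI : Lε.Structure S := memStruc S r
  exact BoundedFormula.realize_ex

@[simp] lemma brealize_inf (v : Fin k → S) (xs : Fin n → S) (φ ψ : Lε.BoundedFormula (Fin k) n) :
    BRealizeIn S r (φ ⊓ ψ) v xs ↔ BRealizeIn S r φ v xs ∧ BRealizeIn S r ψ v xs := by
  letI : Lε.Structure S := memStruc S r
  exact BoundedFormula.realize_inf

@[simp] lemma brealize_sup (v : Fin k → S) (xs : Fin n → S) (φ ψ : Lε.BoundedFormula (Fin k) n) :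
    BRealizeIn S r (φ ⊔ ψ) v xs ↔ BRealizeIn S r φ v xs ∨ BRealizeIn S r ψ v xs := by
  letI : Lε.Structure S := memStruc S r
  exact BoundedFormula.realize_sup

@[simp] lemma brealize_imp (v : Fin k → S) (xs : Fin n → S) (φ ψ : Lε.BoundedFormula (Fin k) n) :
    BRealizeIn S r (φ.imp ψ) v xs ↔ (BRealizeIn S r φ v xs → BRealizeIn S r ψ v xs) := by
  letI : Lε.Structure S := memStruc S r
  exact BoundedFormula.realize_imp

@[simp] lemma brealize_iff (v : Fin k → S) (xs : Fin n → S) (φ ψ : Lε.BoundedFormula (Fin k) n) :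
    BRealizeIn S r (φ.iff ψ) v xs ↔ (BRealizeIn S r φ v xs ↔ BRealizeIn S r ψ v xs) := by
  letI : Lε.Structure S := memStruc S r
  exact BoundedFormula.realize_iff

@[simp] lemma brealize_not (v : Fin k → S) (xs : Fin n → S) (φ : Lε.BoundedFormula (Fin k) n) :
    BRealizeIn S r (∼φ) v xs ↔ ¬ BRealizeIn S r φ v xs := by
  letI : Lε.Structure S := memStruc S r
  exact BoundedFormula.realize_not

end

/-- `PairMemP r z w f`: abstract statement "the Kuratowski pair (z,w) belongs to f". -/
def PairMemP {S : Type*} (r : S → S → Prop) (z w f : S) : Prop :=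
  ∃ p, r p f ∧ ∀ q, r q p ↔ ((∀ t, r t q ↔ t = z) ∨ (∀ t, r t q ↔ (t = z ∨ t = w)))

/-- formula expressing `PairMemP` for three variables. -/
def pairMemF {k n : ℕ} (z w f : Fin k ⊕ Fin n) : Lε.BoundedFormula (Fin k) n :=
  let p₁ : Fin k ⊕ Fin (n+1) := Sum.inr (Fin.last n)
  let q₂ : Fin k ⊕ Fin (n+2) := Sum.inr (Fin.last (n+1))
  let t₃ : Fin k ⊕ Fin (n+3) := Sum.inr (Fin.last (n+2))
  let z₃ := lft (lft (lft z)); let w₃ := lft (lft (lft w))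
  ∃' ((memf p₁ (lft f)) ⊓
    ∀' ((memf q₂ (lft p₁)).iff
      ((∀' ((memf t₃ (lft q₂)).iff (eqf t₃ z₃))) ⊔
       (∀' ((memf t₃ (lft q₂)).iff ((eqf t₃ z₃) ⊔ (eqf t₃ w₃)))))))

@[simp] lemma brealize_pairMemF {S : Type*} {r : S → S → Prop} {k n : ℕ}
    (v : Fin k → S) (xs : Fin n → S) (z w f : Fin k ⊕ Fin n) :
    BRealizeIn S r (pairMemF z w f) v xs ↔
      PairMemP r (Sum.elim v xs z) (Sum.elim v xs w) (Sum.elim v xs f) := by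
  simp [pairMemF, PairMemP]

/-- real semantics of `PairMemP` over ZFC sets. -/
lemma pairMemP_zf (z w f : ZFSet) : PairMemP (· ∈ ·) z w f ↔ ZFSet.pair z w ∈ f := by
  have key : ∀ q : ZFSet, q ∈ ZFSet.pair z w ↔
      ((∀ t : ZFSet, t ∈ q ↔ t = z) ∨ (∀ t : ZFSet, t ∈ q ↔ (t = z ∨ t = w))) := by
    intro q
    rw [ZFSet.pair, ZFSet.mem_pair]
    constructor
    · rintro (rfl | rfl)
      · exact Or.inl fun t => ZFSet.mem_singleton
      · exact Or.inr fun t => ZFSet.mem_pair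
    · rintro (h | h)
      · exact Or.inl (ZFSet.ext fun t => by rw [h t, ZFSet.mem_singleton])
      · exact Or.inr (ZFSet.ext fun t => by rw [h t, ZFSet.mem_pair])
  constructor
  · rintro ⟨p, hp, hq⟩
    simp only [] at hq
    have : p = ZFSet.pair z w := ZFSet.ext fun q => by show q ∈ p ↔ _; rw [hq q, key q]
    rwa [this] at hp
  · intro h
    exact ⟨ZFSet.pair z w, h, fun q => key q⟩

section Formulas
variable {S : Type*} {r : S → S → Prop}

@[simp] lemma snoc_fin1 (xs : Fin 0 → S) (a : S) (i : Fin 1) :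
    Fin.snoc (α := fun _ => S) xs a i = a := by
  rw [Subsingleton.elim i (Fin.last 0), Fin.snoc_last]

@[simp] lemma snoc_fin2_one (xs : Fin 1 → S) (a : S) :
    Fin.snoc (α := fun _ => S) xs a 1 = a := by
  rw [show (1 : Fin 2) = Fin.last 1 from rfl, Fin.snoc_last]

@[simp] lemma snoc_fin3_two (xs : Fin 2 → S) (a : S) :
    Fin.snoc (α := fun _ => S) xs a 2 = a := by
  rw [show (2 : Fin 3) = Fin.last 2 from rfl, Fin.snoc_last]

/-- "v0 is empty" -/
def φEmpty : Lε.Formula (Fin 1) :=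
  ∀' ∼(memf (Sum.inr (Fin.last 0)) (lft (Sum.inl 0)))

lemma char_empty (v : Fin 1 → S) : RealizeIn S r φEmpty v ↔ ∀ x : S, ¬ r x (v 0) := by
  rw [realizeIn_eq]; simp [φEmpty]

/-- "v2 = v0 ∩ v1" -/
def φInter : Lε.Formula (Fin 3) :=
  ∀' ((memf (Sum.inr (Fin.last 0)) (lft (Sum.inl 2))).iff
    ((memf (Sum.inr (Fin.last 0)) (lft (Sum.inl 0))) ⊓
     (memf (Sum.inr (Fin.last 0)) (lft (Sum.inl 1)))))

lemma char_inter (v : Fin 3 → S) :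
    RealizeIn S r φInter v ↔ ∀ x : S, r x (v 2) ↔ (r x (v 0) ∧ r x (v 1)) := by
  rw [realizeIn_eq]; simp [φInter]

/-- "v0 ⊆ v1" -/
def φSubset : Lε.Formula (Fin 2) :=
  ∀' ((memf (Sum.inr (Fin.last 0)) (lft (Sum.inl 0))).imp
      (memf (Sum.inr (Fin.last 0)) (lft (Sum.inl 1))))

lemma char_subset (v : Fin 2 → S) :
    RealizeIn S r φSubset v ↔ ∀ x : S, r x (v 0) → r x (v 1) := by
  rw [realizeIn_eq]; simp [φSubset]

/-- "every element of v0 is in v1 or in v2" -/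
def φUltra : Lε.Formula (Fin 3) :=
  ∀' ((memf (Sum.inr (Fin.last 0)) (lft (Sum.inl 0))).imp
      ((memf (Sum.inr (Fin.last 0)) (lft (Sum.inl 1))) ⊔
       (memf (Sum.inr (Fin.last 0)) (lft (Sum.inl 2)))))

lemma char_ultra (v : Fin 3 → S) :
    RealizeIn S r φUltra v ↔ ∀ x : S, r x (v 0) → (r x (v 1) ∨ r x (v 2)) := by
  rw [realizeIn_eq]; simp [φUltra]

/-- "v0 = {x ∈ v1 : v2 ⊆ x}" -/
def φFine : Lε.Formula (Fin 3) :=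
  ∀' ((memf (Sum.inr (Fin.last 0)) (lft (Sum.inl 0))).iff
    ((memf (Sum.inr (Fin.last 0)) (lft (Sum.inl 1))) ⊓
     (∀' ((memf (Sum.inr (Fin.last 1)) (lft (lft (Sum.inl 2)))).imp
          (memf (Sum.inr (Fin.last 1)) (lft (Sum.inr (Fin.last 0))))))))

lemma char_fine (v : Fin 3 → S) :
    RealizeIn S r φFine v ↔
      ∀ x : S, r x (v 0) ↔ (r x (v 1) ∧ ∀ z : S, r z (v 2) → r z x) := by
  rw [realizeIn_eq]; simp [φFine]

/-- "every element of v0 is paired by v2 with some element of v1" -/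
def φFunc : Lε.Formula (Fin 3) :=
  ∀' ((memf (Sum.inr (Fin.last 0)) (lft (Sum.inl 0))).imp
    (∃' ((memf (Sum.inr (Fin.last 1)) (lft (lft (Sum.inl 1)))) ⊓
      (pairMemF (lft (Sum.inr (Fin.last 0))) (Sum.inr (Fin.last 1)) (lft (lft (Sum.inl 2)))))))

lemma char_func (v : Fin 3 → S) :
    RealizeIn S r φFunc v ↔
      ∀ z : S, r z (v 0) → ∃ w : S, r w (v 1) ∧ PairMemP r z w (v 2) := by
  rw [realizeIn_eq]; simp [φFunc]

/-- "the pair relation coded by v0 is injective" -/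
def φInj : Lε.Formula (Fin 1) :=
  ∀' ∀' ∀' ((pairMemF (lft (lft (Sum.inr (Fin.last 0)))) (Sum.inr (Fin.last 2))
                (lft (lft (lft (Sum.inl 0))))).imp
            ((pairMemF (lft (Sum.inr (Fin.last 1))) (Sum.inr (Fin.last 2))
                (lft (lft (lft (Sum.inl 0))))).imp
             (eqf (lft (lft (Sum.inr (Fin.last 0)))) (lft (Sum.inr (Fin.last 1))))))

lemma char_inj (v : Fin 1 → S) :
    RealizeIn S r φInj v ↔
      ∀ a b c : S, PairMemP r a c (v 0) → PairMemP r b c (v 0) → a = b := by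
  rw [realizeIn_eq]; simp [φInj]

/-- "the pair relation coded by v0 is single-valued" -/
def φFunF : Lε.Formula (Fin 1) :=
  ∀' ∀' ∀' ((pairMemF (lft (lft (Sum.inr (Fin.last 0)))) (lft (Sum.inr (Fin.last 1)))
                (lft (lft (lft (Sum.inl 0))))).imp
            ((pairMemF (lft (lft (Sum.inr (Fin.last 0)))) (Sum.inr (Fin.last 2))
                (lft (lft (lft (Sum.inl 0))))).imp
             (eqf (lft (Sum.inr (Fin.last 1))) (Sum.inr (Fin.last 2)))))

lemma char_funF (v : Fin 1 → S) :
    RealizeIn S r φFunF v ↔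
      ∀ a b c : S, PairMemP r a b (v 0) → PairMemP r a c (v 0) → b = c := by
  rw [realizeIn_eq]; simp [φFunF]

/-- "(v0, v1) ∈ v2" -/
def φPair : Lε.Formula (Fin 3) :=
  pairMemF (Sum.inl 0) (Sum.inl 1) (Sum.inl 2)

lemma char_pair (v : Fin 3 → S) :
    RealizeIn S r φPair v ↔ PairMemP r (v 0) (v 1) (v 2) := by
  rw [realizeIn_eq]; simp [φPair]

/-- "nothing is paired with v0 by v1" -/
def φNoPre : Lε.Formula (Fin 2) :=
  ∀' ∼(pairMemF (Sum.inr (Fin.last 0)) (lft (Sum.inl 0)) (lft (Sum.inl 1)))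

lemma char_noPre (v : Fin 2 → S) :
    RealizeIn S r φNoPre v ↔ ∀ z : S, ¬ PairMemP r z (v 0) (v 1) := by
  rw [realizeIn_eq]; simp [φNoPre]

/-- "v0 = {x ∈ v1 : ∀ ξ ∈ x, ∀ y, (ξ,y) ∈ v2 → x ∈ y}" -/
def φDiag : Lε.Formula (Fin 3) :=
  ∀' ((memf (Sum.inr (Fin.last 0)) (lft (Sum.inl 0))).iff
    ((memf (Sum.inr (Fin.last 0)) (lft (Sum.inl 1))) ⊓
     (∀' ((memf (Sum.inr (Fin.last 1)) (lft (Sum.inr (Fin.last 0)))).imp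
        (∀' ((pairMemF (lft (Sum.inr (Fin.last 1))) (Sum.inr (Fin.last 2))
                (lft (lft (lft (Sum.inl 2))))).imp
            (memf (lft (lft (Sum.inr (Fin.last 0)))) (Sum.inr (Fin.last 2)))))))))

lemma char_diag (v : Fin 3 → S) :
    RealizeIn S r φDiag v ↔
      ∀ x : S, r x (v 0) ↔ (r x (v 1) ∧
        ∀ ξ : S, r ξ x → ∀ y : S, PairMemP r ξ y (v 2) → r x y) := by
  rw [realizeIn_eq]; simp [φDiag]

end Formulas

/-- `x` is a von Neumann ordinal: a transitive set of transitive sets. -/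
def IsOrd (x : ZFSet) : Prop := x.IsTransitive ∧ ∀ y ∈ x, ZFSet.IsTransitive y

/-- `f` is an injective ZFSet-function from `x` to `y`. -/
def IsInjFn (x y f : ZFSet) : Prop :=
  ZFSet.IsFunc x y f ∧
    ∀ a ∈ x, ∀ b ∈ x, ∀ c : ZFSet, ZFSet.pair a c ∈ f → ZFSet.pair b c ∈ f → a = b

/-- `f` is a ZFSet-bijection between `x` and `y`. -/
def IsBijFn (x y f : ZFSet) : Prop :=
  IsInjFn x y f ∧ ∀ c ∈ y, ∃ a ∈ x, ZFSet.pair a c ∈ f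

/-- `x` is a cardinal: an ordinal admitting no ZFSet-bijection with any of its elements. -/
def IsCard (x : ZFSet) : Prop := IsOrd x ∧ ∀ y ∈ x, ¬ ∃ f : ZFSet, IsBijFn x y f

/-- `𝒫_κ(λ)`: the ZFSet of all subsets of `λ` admitting a ZFSet-injection into some
element of `κ`. -/
def Pk (κ lam : ZFSet) : ZFSet :=
  ZFSet.sep (fun x => ∃ e ∈ κ, ∃ f : ZFSet, IsInjFn x e f) (ZFSet.powerset lam)

/-- `U` is an ultrafilter on the family of ZFSet-subsets of `I`: `∅ ∉ U`, every member of
`U` is a subset of `I`, `U` is closed under binary intersections and under supersets among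
subsets of `I`, and for every `A ⊆ I` either `A ∈ U` or `I ∖ A ∈ U`. -/
def IsZUltrafilterOn (I : ZFSet) (U : Set ZFSet) : Prop :=
  (∅ : ZFSet) ∉ U ∧ (∀ A ∈ U, A ⊆ I) ∧ (∀ A ∈ U, ∀ B ∈ U, A ∩ B ∈ U) ∧
    (∀ A ∈ U, ∀ B : ZFSet, A ⊆ B → B ⊆ I → B ∈ U) ∧
    (∀ A : ZFSet, A ⊆ I → (A ∈ U ∨ I \ A ∈ U))

/-- `U` is fine: `{x ∈ I : x₀ ⊆ x} ∈ U` for every `x₀ ∈ I`. -/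
def IsZFineOn (I : ZFSet) (U : Set ZFSet) : Prop :=
  ∀ x₀ ∈ I, ZFSet.sep (fun x => x₀ ⊆ x) I ∈ U

/-- `U` is normal: the diagonal intersection of any `λ`-indexed family of members of `U`
belongs to `U`. -/
def IsZNormalOn (lam I : ZFSet) (U : Set ZFSet) : Prop :=
  ∀ A : ZFSet → ZFSet, (∀ ξ ∈ lam, A ξ ∈ U) →
    ZFSet.sep (fun x => ∀ ξ ∈ x, x ∈ A ξ) I ∈ U

/-- Claim 2.2.1 (single-universe form): the ultrafilter
`U_j := {A ⊆ 𝒫_κ(λ) : j''λ ∈ j(A)}` derived from a `λ`-supercompactness embedding `j`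
is a fine normal ultrafilter on `I := 𝒫_κ(λ)`. -/
theorem claim_2_2_1 (κ lam : ZFSet) (hκcard : IsCard κ) (hlam : IsOrd lam) (hkl : κ ⊆ lam)
    (M : ZFSet → Prop) (hMtrans : ∀ x y : ZFSet, M x → y ∈ x → M y)
    (j : ZFSet → {x : ZFSet // M x})
    (helem : ∀ (n : ℕ) (φ : Lε.Formula (Fin n)) (v : Fin n → ZFSet),
      RealizeIn ZFSet (· ∈ ·) φ v ↔
        RealizeIn {x : ZFSet // M x} (fun a b => a.1 ∈ b.1) φ (fun i => j (v i)))
    (hcrit : ∀ ξ ∈ κ, (j ξ).1 = ξ)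
    (hjump : lam ∈ (j κ).1)
    (jlam : ZFSet) (hjlam : ∀ y : ZFSet, y ∈ jlam ↔ ∃ ξ ∈ lam, (j ξ).1 = y)
    (hMjlam : M jlam) (hjlammem : jlam ∈ (j (Pk κ lam)).1) :
    IsZUltrafilterOn (Pk κ lam) {A : ZFSet | A ⊆ Pk κ lam ∧ jlam ∈ (j A).1} ∧
      IsZFineOn (Pk κ lam) {A : ZFSet | A ⊆ Pk κ lam ∧ jlam ∈ (j A).1} ∧
      IsZNormalOn lam (Pk κ lam) {A : ZFSet | A ⊆ Pk κ lam ∧ jlam ∈ (j A).1} := by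
  classical
  set I : ZFSet := Pk κ lam with hI
  set r' : {x : ZFSet // M x} → {x : ZFSet // M x} → Prop := fun a b => a.1 ∈ b.1 with hr'
  set U : Set ZFSet := {A : ZFSet | A ⊆ I ∧ jlam ∈ (j A).1} with hU
  have jl : {x : ZFSet // M x} := ⟨jlam, hMjlam⟩
  -- membership of jlam in j-images via transfer, general helpers
  refine ⟨⟨?_, ?_, ?_, ?_, ?_⟩, ?_, ?_⟩
  · -- ∅ ∉ U
    rintro ⟨-, h⟩
    have hreal : RealizeIn ZFSet (· ∈ ·) φEmpty ![∅] :=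
      (char_empty _).mpr (by intro x; simpa using ZFSet.not_mem_empty x)
    have hM := (char_empty (r := r') _).mp ((helem 1 φEmpty ![∅]).mp hreal)
    exact hM ⟨jlam, hMjlam⟩ h
  · exact fun A hA => hA.1
  · -- intersections
    rintro A ⟨hAI, hAj⟩ B ⟨hBI, hBj⟩
    refine ⟨fun x hx => hAI (ZFSet.mem_inter.mp hx).1, ?_⟩
    have hreal : RealizeIn ZFSet (· ∈ ·) φInter ![A, B, A ∩ B] :=
      (char_inter _).mpr fun x => ZFSet.mem_inter
    have hM := (char_inter (r := r') _).mp ((helem 3 φInter ![A, B, A ∩ B]).mp hreal)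
    exact (hM ⟨jlam, hMjlam⟩).mpr ⟨hAj, hBj⟩
  · -- supersets
    rintro A ⟨hAI, hAj⟩ B hAB hBI
    refine ⟨hBI, ?_⟩
    have hreal : RealizeIn ZFSet (· ∈ ·) φSubset ![A, B] :=
      (char_subset _).mpr fun x hx => hAB hx
    have hM := (char_subset (r := r') _).mp ((helem 2 φSubset ![A, B]).mp hreal)
    exact hM ⟨jlam, hMjlam⟩ hAj
  · -- ultra
    intro A hAI
    have hreal : RealizeIn ZFSet (· ∈ ·) φUltra ![I, A, I \ A] :=
      (char_ultra _).mpr (by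
        intro x hx
        by_cases hxA : x ∈ A
        · exact Or.inl hxA
        · exact Or.inr (ZFSet.mem_sdiff.mpr ⟨hx, hxA⟩))
    have hM := (char_ultra (r := r') _).mp ((helem 3 φUltra ![I, A, I \ A]).mp hreal)
    rcases hM ⟨jlam, hMjlam⟩ hjlammem with h | h
    · exact Or.inl ⟨hAI, h⟩
    · exact Or.inr ⟨fun x hx => (ZFSet.mem_sdiff.mp hx).1, h⟩
  · -- fine
    intro x₀ hx₀
    have hx₀sep := ZFSet.mem_sep.mp hx₀
    have hx₀lam : x₀ ⊆ lam := ZFSet.mem_powerset.mp hx₀sep.1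
    obtain ⟨e, he, f, hf⟩ := hx₀sep.2
    have hfst : ∀ {a c : ZFSet}, ZFSet.pair a c ∈ f → a ∈ x₀ ∧ c ∈ e := by
      intro a c h
      obtain ⟨a', ha', b', hb', heq⟩ := ZFSet.mem_prod.mp (hf.1.1 h)
      obtain ⟨rfl, rfl⟩ := ZFSet.pair_injective heq
      exact ⟨ha', hb'⟩
    -- every element of (j x₀).1 lies in jlam
    have hsub : ∀ ζ : ZFSet, ζ ∈ (j x₀).1 → ζ ∈ jlam := by
      intro ζ hζ
      have hMζ : M ζ := hMtrans _ _ (j x₀).2 hζ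
      have hreal : RealizeIn ZFSet (· ∈ ·) φFunc ![x₀, e, f] :=
        (char_func _).mpr (by
          intro z hz
          obtain ⟨w, hw, -⟩ := hf.1.2 z hz
          exact ⟨w, (hfst hw).2, (pairMemP_zf _ _ _).mpr hw⟩)
      have hM := (char_func (r := r') _).mp ((helem 3 φFunc ![x₀, e, f]).mp hreal)
      obtain ⟨w, hwe0, hpm0⟩ := hM ⟨ζ, hMζ⟩ hζ
      have hwe : w.1 ∈ (j e).1 := hwe0
      have hpm : PairMemP r' ⟨ζ, hMζ⟩ w (j f) := hpm0
      have hje : (j e).1 = e := hcrit e he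
      have hw1κ : w.1 ∈ κ := hκcard.1.1 e he (by rw [hje] at hwe; exact hwe)
      have hjw : j w.1 = w := Subtype.ext (hcrit w.1 hw1κ)
      by_cases hcase : ∃ η, η ∈ x₀ ∧ ZFSet.pair η w.1 ∈ f
      · obtain ⟨η, hη, hpair⟩ := hcase
        have hrealp : RealizeIn ZFSet (· ∈ ·) φPair ![η, w.1, f] :=
          (char_pair _).mpr ((pairMemP_zf _ _ _).mpr hpair)
        have hMp0 := (char_pair (r := r') _).mp ((helem 3 φPair ![η, w.1, f]).mp hrealp)
        have hMp : PairMemP r' (j η) (j w.1) (j f) := hMp0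
        have hrealinj : RealizeIn ZFSet (· ∈ ·) φInj ![f] :=
          (char_inj _).mpr (by
            intro a b c hac hbc
            have hac' := (pairMemP_zf _ _ _).mp hac
            have hbc' := (pairMemP_zf _ _ _).mp hbc
            exact hf.2 a (hfst hac').1 b (hfst hbc').1 c hac' hbc')
        have hMinj := (char_inj (r := r') _).mp ((helem 1 φInj ![f]).mp hrealinj)
        have hMp' : PairMemP r' (j η) w (j f) := by rw [← hjw]; exact hMp
        have heq : (⟨ζ, hMζ⟩ : {x : ZFSet // M x}) = j η :=
          hMinj ⟨ζ, hMζ⟩ (j η) w hpm hMp'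
        have : (j η).1 = ζ := by rw [← heq]
        exact (hjlam ζ).mpr ⟨η, hx₀lam hη, this⟩
      · have hrealnp : RealizeIn ZFSet (· ∈ ·) φNoPre ![w.1, f] :=
          (char_noPre _).mpr (by
            intro z hz
            exact hcase ⟨z, (hfst ((pairMemP_zf _ _ _).mp hz)).1,
              (pairMemP_zf _ _ _).mp hz⟩)
        have hMnp := (char_noPre (r := r') _).mp ((helem 2 φNoPre ![w.1, f]).mp hrealnp)
        exact absurd (by rw [← hjw] at hpm; exact hpm) (hMnp ⟨ζ, hMζ⟩)
    -- now the fine set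
    have hreal : RealizeIn ZFSet (· ∈ ·) φFine ![ZFSet.sep (fun x => x₀ ⊆ x) I, I, x₀] :=
      (char_fine _).mpr (by
        intro x
        rw [show ((![ZFSet.sep (fun x => x₀ ⊆ x) I, I, x₀] : Fin 3 → ZFSet) 0) =
          ZFSet.sep (fun x => x₀ ⊆ x) I from rfl]
        rw [ZFSet.mem_sep]
        constructor
        · rintro ⟨h1, h2⟩; exact ⟨h1, fun z hz => h2 hz⟩
        · rintro ⟨h1, h2⟩; exact ⟨h1, fun z hz => h2 z hz⟩)
    have hM := (char_fine (r := r') _).mp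
      ((helem 3 φFine ![ZFSet.sep (fun x => x₀ ⊆ x) I, I, x₀]).mp hreal)
    refine ⟨fun x hx => (ZFSet.mem_sep.mp hx).1, ?_⟩
    exact (hM ⟨jlam, hMjlam⟩).mpr ⟨hjlammem, fun z hz => hsub z.1 hz⟩
  · -- normal
    intro A hA
    set g : ZFSet → ZFSet := fun ξ => ZFSet.pair ξ (A ξ) with hg
    haveI : ZFSet.Definable₁ g := Classical.allZFSetDefinable _
    set F : ZFSet := ZFSet.image g lam with hF
    have hFmem : ∀ y : ZFSet, y ∈ F ↔ ∃ ξ ∈ lam, g ξ = y := fun y => ZFSet.mem_image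
    set D : ZFSet := ZFSet.sep (fun x => ∀ ξ ∈ x, x ∈ A ξ) I with hD
    have hreal : RealizeIn ZFSet (· ∈ ·) φDiag ![D, I, F] :=
      (char_diag _).mpr (by
        intro x
        rw [show ((![D, I, F] : Fin 3 → ZFSet) 0) = D from rfl, hD, ZFSet.mem_sep]
        constructor
        · rintro ⟨hxI, hx⟩
          refine ⟨hxI, fun ξ hξ y hy => ?_⟩
          obtain ⟨ξ', hξ', heq⟩ := (hFmem _).mp ((pairMemP_zf _ _ _).mp hy)
          obtain ⟨rfl, rfl⟩ := ZFSet.pair_injective heq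
          exact hx ξ' hξ
        · rintro ⟨hxI, h⟩
          refine ⟨hxI, fun ξ hξ => ?_⟩
          have hxI' : x ∈ I := hxI
          have hξlam : ξ ∈ lam := ZFSet.mem_powerset.mp (ZFSet.mem_sep.mp hxI').1 hξ
          exact h ξ hξ (A ξ) ((pairMemP_zf _ _ _).mpr ((hFmem _).mpr ⟨ξ, hξlam, rfl⟩)))
    have hM := (char_diag (r := r') _).mp ((helem 3 φDiag ![D, I, F]).mp hreal)
    refine ⟨fun x hx => (ZFSet.mem_sep.mp hx).1, ?_⟩
    refine (hM ⟨jlam, hMjlam⟩).mpr ⟨hjlammem, ?_⟩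
    intro ξ hξ y hy
    obtain ⟨ξ₀, hξ₀, hjξ₀⟩ := (hjlam ξ.1).mp hξ
    have hξeq : j ξ₀ = ξ := Subtype.ext hjξ₀
    have hrealp : RealizeIn ZFSet (· ∈ ·) φPair ![ξ₀, A ξ₀, F] :=
      (char_pair _).mpr ((pairMemP_zf _ _ _).mpr ((hFmem _).mpr ⟨ξ₀, hξ₀, rfl⟩))
    have hMp0 := (char_pair (r := r') _).mp ((helem 3 φPair ![ξ₀, A ξ₀, F]).mp hrealp)
    have hMp : PairMemP r' (j ξ₀) (j (A ξ₀)) (j F) := hMp0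
    have hrealfF : RealizeIn ZFSet (· ∈ ·) φFunF ![F] :=
      (char_funF _).mpr (by
        intro a b c hab hac
        obtain ⟨ξ', hξ', heq⟩ := (hFmem _).mp ((pairMemP_zf _ _ _).mp hab)
        obtain ⟨ξ'', hξ'', heq'⟩ := (hFmem _).mp ((pairMemP_zf _ _ _).mp hac)
        obtain ⟨rfl, rfl⟩ := ZFSet.pair_injective heq
        obtain ⟨rfl, rfl⟩ := ZFSet.pair_injective heq'
        rfl)
    have hMfF := (char_funF (r := r') _).mp ((helem 1 φFunF ![F]).mp hrealfF)
    have : j (A ξ₀) = y := hMfF (j ξ₀) (j (A ξ₀)) y hMp (by rw [hξeq]; exact hy)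
    have hyv : (j (A ξ₀)).1 = y.1 := by rw [this]
    show jlam ∈ y.1
    rw [← hyv]
    exact (hA ξ₀ hξ₀).2
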